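/- arXiv:2507.09325 — 3 statements merged into one kernel-verified Lean document; each statement's English description precedes it below -/
import Mathlib

section
/- Let m > 1 and let K, X be positive random variables (K nondegenerate and independent of X) with E[ln(K + (m-1)X)] = E[ln(mK)]. Then E[X] > (exp(E[ln(mK)]) - E[K])/(m-1). -/
open MeasureTheory ProbabilityTheory Real

theorem ae_eq_const_of_indepFun_self
    {Ω : Type*} [MeasureSpace Ω] [IsProbabilityMeasure (ℙ : Measure Ω)]
    {K : Ω → ℝ} (hK : Measurable K) (h : IndepFun K K) :
    ∃ c : ℝ, K =ᵐ[ℙ] fun _ => c := by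
  have key : ∀ t : ℝ, ℙ (K ⁻¹' Set.Iic t) = 0 ∨ ℙ (K ⁻¹' Set.Iic t) = 1 := by
    intro t
    have := h.measure_inter_preimage_eq_mul (Set.Iic t) (Set.Iic t)
      measurableSet_Iic measurableSet_Iic
    rw [Set.inter_self] at this
    by_cases h0 : ℙ (K ⁻¹' Set.Iic t) = 0
    · exact Or.inl h0
    · right
      have hne : ℙ (K ⁻¹' Set.Iic t) ≠ ⊤ := measure_ne_top _ _
      have h1 : ℙ (K ⁻¹' Set.Iic t) * 1 = ℙ (K ⁻¹' Set.Iic t) * ℙ (K ⁻¹' Set.Iic t) := by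
        rw [mul_one]; exact this
      exact ((ENNReal.mul_right_inj h0 hne).mp h1).symm
  set S : Set ℝ := {t | ℙ (K ⁻¹' Set.Iic t) = 1} with hS
  have hup : ∀ {s t : ℝ}, s ≤ t → s ∈ S → t ∈ S := by
    intro s t hst hs
    have hmono : ℙ (K ⁻¹' Set.Iic s) ≤ ℙ (K ⁻¹' Set.Iic t) :=
      measure_mono (Set.preimage_mono (Set.Iic_subset_Iic.mpr hst))
    rcases key t with h0 | h1
    · exfalso; rw [hS] at hs; simp only [Set.mem_setOf_eq] at hs
      rw [hs, h0] at hmono; exact absurd hmono (by simp)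
    · exact h1
  -- S nonempty
  have hne : S.Nonempty := by
    by_contra hc
    have hall : ∀ n : ℕ, ℙ (K ⁻¹' Set.Iic (n : ℝ)) = 0 := by
      intro n
      rcases key (n : ℝ) with h0 | h1
      · exact h0
      · exact absurd (⟨(n : ℝ), h1⟩ : S.Nonempty) hc
    have hunion : (⋃ n : ℕ, K ⁻¹' Set.Iic (n : ℝ)) = Set.univ := by
      ext ω; simp only [Set.mem_iUnion, Set.mem_preimage, Set.mem_Iic, Set.mem_univ, iff_true]
      exact exists_nat_ge (K ω)
    have : ℙ (Set.univ : Set Ω) = 0 := by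
      rw [← hunion]
      exact measure_iUnion_null fun n => hall n
    simp at this
  -- S bounded below
  have hbdd : BddBelow S := by
    by_contra hc
    have hall : ∀ n : ℕ, ℙ (K ⁻¹' Set.Iic (-(n : ℝ))) = 1 := by
      intro n
      rw [not_bddBelow_iff] at hc
      obtain ⟨t, htS, ht⟩ := hc (-(n : ℝ))
      exact hup ht.le htS
    have hae : ∀ᵐ ω ∂ℙ, ∀ n : ℕ, K ω ≤ -(n : ℝ) := by
      rw [ae_all_iff]
      intro n
      have h0 : ℙ ((K ⁻¹' Set.Iic (-(n : ℝ)))ᶜ) = 0 :=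
        (prob_compl_eq_zero_iff (hK measurableSet_Iic)).mpr (hall n)
      filter_upwards [measure_eq_zero_iff_ae_notMem.mp h0] with ω hω
      simpa using hω
    have : ∀ᵐ ω ∂(ℙ : Measure Ω), False := by
      filter_upwards [hae] with ω hω
      obtain ⟨n, hn⟩ := exists_nat_gt (-(K ω))
      have := hω n
      linarith
    rw [ae_iff] at this
    simp only [not_false_eq_true, Set.setOf_true, measure_univ] at this
    exact one_ne_zero this
  set c := sInf S with hc
  refine ⟨c, ?_⟩
  have hle : ∀ᵐ ω ∂ℙ, K ω ≤ c := by
    have h1 : ∀ᵐ ω ∂ℙ, ∀ n : ℕ, K ω ≤ c + 1 / (n + 1) := by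
      rw [ae_all_iff]
      intro n
      have hexists : ∃ t ∈ S, t < c + 1 / (n + 1) := by
        by_contra hcon
        push_neg at hcon
        have : c + 1 / (n + 1) ≤ c := le_csInf hne fun t ht => hcon t ht
        have : (0:ℝ) < 1 / (n + 1) := by positivity
        linarith
      obtain ⟨t, htS, ht⟩ := hexists
      have : ℙ (K ⁻¹' Set.Iic (c + 1 / (n + 1))) = 1 := hup ht.le htS
      have h0 : ℙ ((K ⁻¹' Set.Iic (c + 1 / (n + 1)))ᶜ) = 0 :=
        (prob_compl_eq_zero_iff (hK measurableSet_Iic)).mpr this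
      filter_upwards [measure_eq_zero_iff_ae_notMem.mp h0] with ω hω
      simpa using hω
    filter_upwards [h1] with ω hω
    refine le_of_forall_pos_le_add fun ε hε => ?_
    obtain ⟨n, hn⟩ := exists_nat_one_div_lt hε
    exact (hω n).trans (by linarith)
  have hge : ∀ᵐ ω ∂ℙ, c ≤ K ω := by
    have h1 : ∀ᵐ ω ∂ℙ, ∀ n : ℕ, c - 1 / (n + 1) < K ω := by
      rw [ae_all_iff]
      intro n
      have hnot : c - 1 / (n + 1) ∉ S := by
        intro hmem
        have : c ≤ c - 1 / (n + 1) := csInf_le hbdd hmem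
        have : (0:ℝ) < 1 / (n + 1) := by positivity
        linarith
      have h0 : ℙ (K ⁻¹' Set.Iic (c - 1 / (n + 1))) = 0 := by
        rcases key (c - 1 / (n + 1)) with h | h
        · exact h
        · exact absurd h hnot
      filter_upwards [measure_eq_zero_iff_ae_notMem.mp h0] with ω hω
      simp only [Set.mem_preimage, Set.mem_Iic, not_le] at hω
      exact hω
    filter_upwards [h1] with ω hω
    refine le_of_forall_pos_le_add fun ε hε => ?_
    obtain ⟨n, hn⟩ := exists_nat_one_div_lt hε
    have := hω n
    linarith
  filter_upwards [hle, hge] with ω h1 h2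
  exact le_antisymm h1 h2

theorem bevertonHolt_lower_bound
    {Ω : Type*} [MeasureSpace Ω] [IsProbabilityMeasure (ℙ : Measure Ω)]
    (m : ℝ) (hm : 1 < m)
    (K X : Ω → ℝ)
    (hK_pos : ∀ᵐ ω ∂ℙ, 0 < K ω) (hX_pos : ∀ᵐ ω ∂ℙ, 0 < X ω)
    (hnondeg : ¬ ∃ c : ℝ, K =ᵐ[ℙ] fun _ => c)
    (hindep : IndepFun K X)
    (hK_int : Integrable K) (hX_int : Integrable X)
    (hlogmK_int : Integrable (fun ω => Real.log (m * K ω)))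
    (hlogsum_int : Integrable (fun ω => Real.log (K ω + (m - 1) * X ω)))
    (hstat : ∫ ω, Real.log (K ω + (m - 1) * X ω) = ∫ ω, Real.log (m * K ω)) :
    (Real.exp (∫ ω, Real.log (m * K ω)) - ∫ ω, K ω) / (m - 1) < ∫ ω, X ω := by
  have hm1 : (0:ℝ) < m - 1 := by linarith
  set Y : Ω → ℝ := fun ω => K ω + (m - 1) * X ω with hYdef
  have hY_pos : ∀ᵐ ω ∂ℙ, 0 < Y ω := by
    filter_upwards [hK_pos, hX_pos] with ω h1 h2
    have : 0 < (m - 1) * X ω := mul_pos hm1 h2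
    simp only [hYdef]; linarith
  have hY_int : Integrable Y := hK_int.add (hX_int.const_mul (m - 1))
  have hYeq : (fun ω => Real.exp (Real.log (Y ω))) =ᵐ[ℙ] Y := by
    filter_upwards [hY_pos] with ω hω
    exact Real.exp_log hω
  have hexpint : Integrable (Real.exp ∘ fun ω => Real.log (Y ω)) :=
    hY_int.congr hYeq.symm
  have hmem : ∀ᵐ ω ∂ℙ, Real.log (Y ω) ∈ (Set.univ : Set ℝ) :=
    Filter.Eventually.of_forall fun ω => Set.mem_univ _
  rcases strictConvexOn_exp.ae_eq_const_or_map_average_lt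
      continuous_exp.continuousOn isClosed_univ hmem hlogsum_int hexpint with h | h
  · -- log Y a.e. constant ⇒ K a.e. constant, contradiction
    exfalso
    set c := ⨍ ω, Real.log (Y ω) ∂ℙ with hcdef
    have hKeq : K =ᵐ[ℙ] fun ω => Real.exp c - (m - 1) * X ω := by
      filter_upwards [h, hY_pos] with ω hω hωpos
      have h1 : Real.exp (Real.log (Y ω)) = Real.exp c := by
        rw [hω]; rfl
      rw [Real.exp_log hωpos] at h1
      have : K ω + (m - 1) * X ω = Real.exp c := h1
      linarith
    have hφ : Measurable fun x : ℝ => Real.exp c - (m - 1) * x :=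
      (measurable_const.sub (measurable_const.mul measurable_id))
    have hKK : IndepFun K K := by
      have := hindep.comp measurable_id hφ
      exact this.congr (Filter.EventuallyEq.refl _ _) hKeq.symm
    set K' := hK_int.1.mk K with hK'def
    have hKK' : K =ᵐ[ℙ] K' := hK_int.1.ae_eq_mk
    have hK'meas : Measurable K' := hK_int.1.stronglyMeasurable_mk.measurable
    obtain ⟨d, hd⟩ := ae_eq_const_of_indepFun_self hK'meas (hKK.congr hKK' hKK')
    exact hnondeg ⟨d, hKK'.trans hd⟩
  · -- strict Jensen
    rw [average_eq_integral, average_eq_integral] at h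
    have hint2 : ∫ ω, Real.exp (Real.log (Y ω)) = ∫ ω, Y ω :=
      integral_congr_ae hYeq
    rw [hint2] at h
    have hintY : ∫ ω, Y ω = (∫ ω, K ω) + (m - 1) * ∫ ω, X ω := by
      rw [hYdef]
      rw [integral_add hK_int (hX_int.const_mul (m - 1)), integral_const_mul]
    rw [hintY] at h
    have hstat' : ∫ ω, Real.log (Y ω) = ∫ ω, Real.log (m * K ω) := hstat
    rw [hstat'] at h
    rw [div_lt_iff₀ hm1]
    nlinarith
end

section
/- Let α > 1, 0 < c ≤ 1, and let K, N be positive random variables, K nondegenerate, independent of each other, with E[ln(α/(1+K·N)^c)] = 0. Then E[N] > (α^{1/c} - 1)/E[K]. -/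
open MeasureTheory ProbabilityTheory Real

theorem hassell_noise_increases_population
    {Ω : Type*} [MeasureSpace Ω] [IsProbabilityMeasure (ℙ : Measure Ω)]
    (α c : ℝ) (hα : 1 < α) (hc0 : 0 < c) (hc1 : c ≤ 1)
    (K N : Ω → ℝ)
    (hK_pos : ∀ᵐ ω ∂ℙ, 0 < K ω) (hN_pos : ∀ᵐ ω ∂ℙ, 0 < N ω)
    (hnondeg : ¬ ∃ b : ℝ, K =ᵐ[ℙ] fun _ => b)
    (hindep : IndepFun K N)
    (hK_int : Integrable K) (hN_int : Integrable N)
    (hlog_int : Integrable (fun ω => Real.log (α / (1 + K ω * N ω) ^ c)))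
    (hstat : ∫ ω, Real.log (α / (1 + K ω * N ω) ^ c) = 0) :
    (α ^ (1 / c) - 1) / (∫ ω, K ω) < ∫ ω, N ω := by
  have hα0 : (0:ℝ) < α := lt_trans one_pos hα
  set X : Ω → ℝ := fun ω => 1 + K ω * N ω with hX_def
  -- basic positivity
  have hX_gt1 : ∀ᵐ ω ∂ℙ, 1 < X ω := by
    filter_upwards [hK_pos, hN_pos] with ω h1 h2
    have : 0 < K ω * N ω := mul_pos h1 h2
    simp [hX_def]; linarith
  -- integrability of K * N and X
  have hKN_int : Integrable (fun ω => K ω * N ω) := hindep.integrable_mul hK_int hN_int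
  have hX_int : Integrable X := (integrable_const (1:ℝ)).add hKN_int
  -- rewrite the log
  have hlog_eq : ∀ᵐ ω ∂ℙ, Real.log (α / X ω ^ c) = Real.log α - c * Real.log (X ω) := by
    filter_upwards [hX_gt1] with ω h1
    have hXpos : 0 < X ω := lt_trans one_pos h1
    rw [Real.log_div (ne_of_gt hα0) (ne_of_gt (Real.rpow_pos_of_pos hXpos c)),
      Real.log_rpow hXpos]
  have hlogX_eq : (fun ω => Real.log (X ω)) =ᵐ[ℙ]
      fun ω => (Real.log α - Real.log (α / X ω ^ c)) * c⁻¹ := by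
    filter_upwards [hlog_eq] with ω h
    rw [h]; field_simp; ring
  have hlogX_int : Integrable (fun ω => Real.log (X ω)) := by
    refine (Integrable.congr ?_ hlogX_eq.symm)
    exact ((integrable_const (Real.log α)).sub hlog_int).mul_const _
  have hlogX_val : ∫ ω, Real.log (X ω) = Real.log α / c := by
    rw [integral_congr_ae hlogX_eq, integral_mul_const, integral_sub (integrable_const _) hlog_int,
      hstat, integral_const]
    simp [div_eq_mul_inv]
  -- means
  have hK_nonneg : 0 ≤ᵐ[ℙ] K := hK_pos.mono fun ω h => le_of_lt h
  have hN_nonneg : 0 ≤ᵐ[ℙ] N := hN_pos.mono fun ω h => le_of_lt h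
  have hEK_pos : 0 < ∫ ω, K ω := by
    rw [integral_pos_iff_support_of_nonneg_ae hK_nonneg hK_int]
    have hsub : ∀ᵐ ω ∂ℙ, ω ∈ Function.support K := by
      filter_upwards [hK_pos] with ω h; exact ne_of_gt h
    have h2 : (ℙ : Measure Ω) ((Function.support K)ᶜ) = 0 := ae_iff.mp hsub
    by_contra h
    rw [not_lt, le_zero_iff] at h
    have hle : (ℙ : Measure Ω) Set.univ ≤ (ℙ : Measure Ω) (Function.support K) + (ℙ : Measure Ω) ((Function.support K)ᶜ) := by
      calc (ℙ : Measure Ω) Set.univ = (ℙ : Measure Ω) (Function.support K ∪ (Function.support K)ᶜ) := by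
            rw [Set.union_compl_self]
        _ ≤ _ := measure_union_le _ _
    rw [h, h2, measure_univ] at hle
    simp at hle
  have hEN_nonneg : 0 ≤ ∫ ω, N ω := integral_nonneg_of_ae hN_nonneg
  -- Jensen (strict)
  have hjensen := StrictConcaveOn.ae_eq_const_or_lt_map_average (μ := ℙ) (f := X)
    (strictConcaveOn_log_Ioi.subset (Set.Ici_subset_Ioi.mpr one_pos) (convex_Ici 1))
    (Real.continuousOn_log.mono (by intro x hx; simp at hx ⊢; linarith))
    isClosed_Ici (hX_gt1.mono fun ω h => le_of_lt h) hX_int hlogX_int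
  rcases hjensen with hconst | hlt
  · -- degenerate case: X a.e. constant, contradiction with nondegeneracy of K
    exfalso
    set b : ℝ := ⨍ ω, X ω with hb_def
    have hb1 : ∀ᵐ ω ∂ℙ, X ω = b := hconst
    -- get that b > 1
    have hbpos : 1 < b := by
      have := (hb1.and hX_gt1).exists
      obtain ⟨ω, h1, h2⟩ := this
      · rwa [h1] at h2
    have hKeq : K =ᵐ[ℙ] (fun x => (b - 1) * x⁻¹) ∘ N := by
      filter_upwards [hb1, hN_pos] with ω h1 h2
      have : K ω * N ω = b - 1 := by simp [hX_def] at h1; linarith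
      field_simp [ne_of_gt h2, Function.comp]
      show K ω = (b - 1) / N ω; rw [eq_div_iff (ne_of_gt h2)]; linarith [this]
    have hKK : IndepFun K K := by
      have h1 : IndepFun K ((fun x => (b - 1) * x⁻¹) ∘ N) :=
        hindep.comp measurable_id (measurable_const.mul measurable_inv)
      exact h1.congr Filter.EventuallyEq.rfl hKeq.symm
    have hKsq_int : Integrable (fun ω => K ω * K ω) := hKK.integrable_mul hK_int hK_int
    set m : ℝ := ∫ ω, K ω with hm_def
    have hKsq : ∫ ω, K ω * K ω = m * m := hKK.integral_mul_eq_mul_integral hK_int.1 hK_int.1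
    have i2 : Integrable (fun ω => 2 * m * K ω) := hK_int.const_mul _
    have i12 : Integrable (fun ω => K ω * K ω - 2 * m * K ω) := hKsq_int.sub i2
    have hvar_int : Integrable (fun ω => (K ω - m) ^ 2) := by
      have : (fun ω => (K ω - m) ^ 2) = fun ω => (K ω * K ω - 2 * m * K ω) + m ^ 2 := by
        funext ω; ring
      rw [this]
      exact i12.add (integrable_const _)
    have hvar_zero : ∫ ω, (K ω - m) ^ 2 = 0 := by
      have e1 : ∫ ω, (K ω - m) ^ 2 = ∫ ω, ((K ω * K ω - 2 * m * K ω) + m ^ 2) := by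
        congr 1; funext ω; ring
      rw [e1, integral_add i12 (integrable_const _),
        integral_sub hKsq_int i2, integral_const_mul, integral_const, hKsq]
      simp [← hm_def]; ring
    have : ∀ᵐ ω ∂ℙ, (K ω - m) ^ 2 = 0 := by
      have := (integral_eq_zero_iff_of_nonneg_ae
        (Filter.Eventually.of_forall fun ω => sq_nonneg (K ω - m)) hvar_int).mp hvar_zero
      filter_upwards [this] with ω h; exact h
    exact hnondeg ⟨m, this.mono fun ω h => by nlinarith [sq_nonneg (K ω - m)]⟩
  · -- strict Jensen case
    rw [average_eq_integral, average_eq_integral, hlogX_val] at hlt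
    have hEX : ∫ ω, X ω = 1 + (∫ ω, K ω) * ∫ ω, N ω := by
      have hmul : ∫ ω, K ω * N ω = (∫ ω, K ω) * ∫ ω, N ω :=
        hindep.integral_mul_eq_mul_integral hK_int.1 hN_int.1
      have e1 : ∫ ω, X ω = ∫ ω, ((1:ℝ) + K ω * N ω) := rfl
      rw [e1, integral_add (integrable_const _) hKN_int, integral_const, hmul]
      simp
    rw [hEX] at hlt
    have hEXpos : (0:ℝ) < 1 + (∫ ω, K ω) * ∫ ω, N ω := by positivity
    have hkey : α ^ (1 / c) < 1 + (∫ ω, K ω) * ∫ ω, N ω := by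
      have h1 : α ^ (1 / c) = Real.exp (Real.log α / c) := by
        rw [Real.rpow_def_of_pos hα0]; ring_nf
      have h2 : 1 + (∫ ω, K ω) * ∫ ω, N ω =
          Real.exp (Real.log (1 + (∫ ω, K ω) * ∫ ω, N ω)) := (Real.exp_log hEXpos).symm
      rw [h1, h2]
      exact Real.exp_lt_exp.mpr hlt
    rw [div_lt_iff₀ hEK_pos]
    nlinarith
end

section
/- Let d, γ̄ > 0 and let (γ, X) be random variables with γ positive integrable, X positive integrable, γ independent of X with E[γ] = γ̄, and suppose E[ln((1+γX)/(1+d))] = 0 with 1+γX nondegenerate. Then E[X] > d/γ̄. -/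
open MeasureTheory ProbabilityTheory Real

theorem predator_prey_noise_increases_prey
    {Ω : Type*} [MeasureSpace Ω] [IsProbabilityMeasure (ℙ : Measure Ω)]
    (d γbar : ℝ) (hd : 0 < d) (hγbar : 0 < γbar)
    (γ X : Ω → ℝ)
    (hγ_pos : ∀ᵐ ω ∂ℙ, 0 < γ ω) (hX_pos : ∀ᵐ ω ∂ℙ, 0 < X ω)
    (hγ_int : Integrable γ) (hX_int : Integrable X)
    (hindep : IndepFun γ X)
    (hEγ : (∫ ω, γ ω) = γbar)
    (hnondeg : ¬ ∃ b : ℝ, (fun ω => 1 + γ ω * X ω) =ᵐ[ℙ] fun _ => b)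
    (hlog_int : Integrable (fun ω => Real.log ((1 + γ ω * X ω) / (1 + d))))
    (hstat : ∫ ω, Real.log ((1 + γ ω * X ω) / (1 + d)) = 0) :
    d / γbar < ∫ ω, X ω := by
  have hmul_int : Integrable (fun ω => γ ω * X ω) := hindep.integrable_mul hγ_int hX_int
  set f : Ω → ℝ := fun ω => 1 + γ ω * X ω with hf
  have hf_int : Integrable f := (integrable_const (1 : ℝ)).add hmul_int
  have hf_ge : ∀ᵐ ω ∂ℙ, f ω ∈ Set.Ici (1 : ℝ) := by
    filter_upwards [hγ_pos, hX_pos] with ω h1 h2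
    have : (0:ℝ) ≤ γ ω * X ω := (mul_pos h1 h2).le
    simp only [hf, Set.mem_Ici]
    linarith
  have h1d : (0:ℝ) < 1 + d := by linarith
  -- rewrite the stationarity condition
  have hlog_eq : ∀ᵐ ω ∂ℙ, Real.log ((1 + γ ω * X ω) / (1 + d))
      = Real.log (f ω) - Real.log (1 + d) := by
    filter_upwards [hf_ge] with ω hω
    exact Real.log_div (by simp [hf] at hω ⊢; linarith) (by linarith)
  have hlogf_int : Integrable (fun ω => Real.log (f ω)) := by
    have : Integrable (fun ω => Real.log ((1 + γ ω * X ω) / (1 + d)) + Real.log (1 + d)) :=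
      hlog_int.add (integrable_const _)
    refine this.congr ?_
    filter_upwards [hlog_eq] with ω hω
    rw [hω]; ring
  have hlogf_avg : (∫ ω, Real.log (f ω)) = Real.log (1 + d) := by
    have h1 : ∫ ω, Real.log ((1 + γ ω * X ω) / (1 + d))
        = ∫ ω, (Real.log (f ω) - Real.log (1 + d)) := integral_congr_ae hlog_eq
    rw [integral_sub hlogf_int (integrable_const _), integral_const] at h1
    have := hstat
    rw [h1] at this
    simp only [measure_univ, probReal_univ, ENNReal.toReal_one, smul_eq_mul, one_mul] at this
    linarith
  -- strict Jensen
  have hconc : StrictConcaveOn ℝ (Set.Ici (1:ℝ)) Real.log :=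
    strictConcaveOn_log_Ioi.subset (fun x hx => show (0:ℝ) < x from lt_of_lt_of_le one_pos hx) (convex_Ici 1)
  have hcont : ContinuousOn Real.log (Set.Ici (1:ℝ)) :=
    Real.continuousOn_log.mono (fun x hx => by
      simp only [Set.mem_compl_iff, Set.mem_singleton_iff]
      intro h; rw [h] at hx; exact absurd hx (by norm_num))
  have := hconc.ae_eq_const_or_lt_map_average hcont isClosed_Ici hf_ge hf_int
    (hlogf_int.congr (Filter.EventuallyEq.refl _ _))
  rcases this with h | h
  · exact absurd ⟨⨍ x, f x, h⟩ hnondeg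
  · have havg : ⨍ x, f x ∂ℙ = ∫ x, f x := by simp [average_eq_integral]
    have havg2 : (⨍ x, Real.log (f x) ∂ℙ) = ∫ x, Real.log (f x) := by
      simp [average_eq_integral]
    rw [havg, havg2, hlogf_avg] at h
    have hIM : (∫ a, γ a * X a) = γbar * ∫ ω, X ω := by
      have := hindep.integral_mul_eq_mul_integral hγ_int.1 hX_int.1
      simp only [Pi.mul_apply] at this
      rw [show (fun a => γ a * X a) = fun a => (γ * X) a from rfl]
      simpa [hEγ] using this
    have hfint_eq : (∫ x, f x) = 1 + γbar * ∫ ω, X ω := by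
      rw [hf, integral_add (integrable_const _) hmul_int, integral_const, hIM]
      simp
    have hfpos : (0:ℝ) < ∫ x, f x := by
      have h1le : (1:ℝ) ≤ ∫ x, f x := by
        have := integral_mono_ae (integrable_const (1:ℝ)) hf_int
          (hf_ge.mono fun ω hω => hω)
        simpa using this
      linarith
    have hlt : 1 + d < ∫ x, f x := by
      calc 1 + d = Real.exp (Real.log (1 + d)) := (Real.exp_log h1d).symm
      _ < Real.exp (Real.log (∫ x, f x)) := Real.exp_lt_exp.mpr h
      _ = ∫ x, f x := Real.exp_log hfpos
    rw [hfint_eq] at hlt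
    rw [div_lt_iff₀ hγbar]
    linarith
end
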